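/- For the d-dimensional depolarizing channel D_λ with λ ≥ 0, applied to a pure state |ψ⟩ with mean energy E = ⟨ψ|H|ψ⟩ where the Hamiltonian H has eigenvalues 0 = ε₁ ≤ ... ≤ ε_d = 1, the ergotropy of the output state equals λE. -/

import Mathlib

open Matrix BigOperators

/-- Mean energy `Tr[ρH]` (real part). -/
noncomputable def energy {ι : Type*} [Fintype ι] (ρ H : Matrix ι ι ℂ) : ℝ :=
  (Matrix.trace (ρ * H)).re

/-- Minimum of `Tr[UρU†H]` over all unitaries `U`. -/
noncomputable def minEnergy {ι : Type*} [Fintype ι] [DecidableEq ι]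
    (ρ H : Matrix ι ι ℂ) : ℝ :=
  sInf {x | ∃ U ∈ Matrix.unitaryGroup ι ℂ, x = energy (U * ρ * star U) H}

/-- Ergotropy `ℰ(ρ;H) = Tr[ρH] − min_U Tr[UρU†H]`. -/
noncomputable def ergotropy {ι : Type*} [Fintype ι] [DecidableEq ι]
    (ρ H : Matrix ι ι ℂ) : ℝ :=
  energy ρ H - minEnergy ρ H

/-- The `d`-dimensional depolarizing channel `D_λ(ρ) = λρ + (1−λ)Tr[ρ]·(I/d)`. -/
noncomputable def depol (d : ℕ) (l : ℝ) (ρ : Matrix (Fin d) (Fin d) ℂ) :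
    Matrix (Fin d) (Fin d) ℂ :=
  (l : ℂ) • ρ + (((1 - l) / d : ℝ) : ℂ) • Matrix.trace ρ • (1 : Matrix (Fin d) (Fin d) ℂ)

/-- The rank-one projector `|ψ⟩⟨ψ|` onto a pure state `ψ`. -/
noncomputable def pureProj (d : ℕ) (ψ : Fin d → ℂ) : Matrix (Fin d) (Fin d) ℂ :=
  Matrix.of fun i j => ψ i * star (ψ j)

lemma energy_diag {d : ℕ} (M : Matrix (Fin d) (Fin d) ℂ) (eps : Fin d → ℝ) :
    energy M (Matrix.diagonal fun i => (eps i : ℂ)) = ∑ i, eps i * (M i i).re := by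
  simp only [energy, Matrix.trace, Matrix.diag_apply, Matrix.mul_diagonal, Complex.re_sum]
  congr 1; ext i
  simp [Complex.mul_re, mul_comm]

lemma conj_pureProj_diag {d : ℕ} (U : Matrix (Fin d) (Fin d) ℂ) (ψ : Fin d → ℂ) (i : Fin d) :
    (U * pureProj d ψ * star U) i i = (U *ᵥ ψ) i * star ((U *ᵥ ψ) i) := by
  simp only [Matrix.mul_apply, pureProj, Matrix.of_apply, Matrix.mulVec, dotProduct,
    Matrix.star_apply, star_sum, star_mul', Finset.sum_mul, Finset.mul_sum]
  congr 1; ext k; exact Finset.sum_congr rfl fun j _ => by ring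

lemma energy_depol {d : ℕ} (l : ℝ) (ρ H : Matrix (Fin d) (Fin d) ℂ)
    (hρ : Matrix.trace ρ = 1)
    (U : Matrix (Fin d) (Fin d) ℂ) (hU : U ∈ Matrix.unitaryGroup (Fin d) ℂ) :
    energy (U * depol d l ρ * star U) H
      = l * energy (U * ρ * star U) H + ((1 - l) / d) * (Matrix.trace H).re := by
  have hU1 : U * star U = 1 := (Matrix.mem_unitaryGroup_iff).mp hU
  have : U * depol d l ρ * star U
      = (l : ℂ) • (U * ρ * star U) + (((1 - l) / d : ℝ) : ℂ) • (1 : Matrix (Fin d) (Fin d) ℂ) := by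
    simp [depol, hρ, Matrix.mul_add, Matrix.add_mul, Matrix.mul_smul, Matrix.smul_mul, hU1]
  rw [this]
  simp [energy, Matrix.add_mul, Matrix.smul_mul, Matrix.trace_add, Matrix.trace_smul,
    Complex.re_ofReal_mul]

lemma exists_unitary_mulVec {d : ℕ} (hd : 0 < d) (ψ : Fin d → ℂ)
    (hψ : dotProduct (star ψ) ψ = 1) :
    ∃ U ∈ Matrix.unitaryGroup (Fin d) ℂ,
      ∀ i, (U *ᵥ ψ) i = if i = (⟨0, hd⟩ : Fin d) then 1 else 0 := by
  set i0 : Fin d := ⟨0, hd⟩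
  let ψ' : EuclideanSpace ℂ (Fin d) := WithLp.toLp 2 ψ
  have hinner : (inner ℂ ψ' ψ' : ℂ) = 1 := by
    rw [PiLp.inner_apply]
    refine (Finset.sum_congr rfl fun j _ => ?_).trans hψ
    simp [ψ', Complex.conj_mul']
  have hv : Orthonormal ℂ (({i0} : Set (Fin d)).restrict (fun _ : Fin d => ψ')) := by
    rw [orthonormal_iff_ite]
    rintro ⟨i, hi⟩ ⟨j, hj⟩
    simp only [Set.mem_singleton_iff] at hi hj
    subst hi; subst hj
    show inner ℂ ψ' ψ' = _
    rw [hinner]; simp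
  have hcard : Module.finrank ℂ (EuclideanSpace ℂ (Fin d)) = Fintype.card (Fin d) := by
    simp
  obtain ⟨b, hb⟩ := hv.exists_orthonormalBasis_extension_of_card_eq hcard
  have hb0 : b i0 = ψ' := hb i0 rfl
  refine ⟨Matrix.of fun i j => star (b i j), ?_, ?_⟩
  · rw [Matrix.mem_unitaryGroup_iff]
    ext i k
    have hik := (orthonormal_iff_ite.mp b.orthonormal) i k
    rw [PiLp.inner_apply] at hik
    simp only [Matrix.mul_apply, Matrix.one_apply, Matrix.star_apply, Matrix.of_apply,
      star_star]
    rw [← hik]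
    exact Finset.sum_congr rfl fun j _ => by simp [mul_comm]
  · intro i
    have hii := (orthonormal_iff_ite.mp b.orthonormal) i i0
    rw [PiLp.inner_apply, hb0] at hii
    simp only [Matrix.mulVec, dotProduct, Matrix.of_apply]
    rw [← hii]
    exact Finset.sum_congr rfl fun j _ => by simp [ψ', mul_comm]

/-- For the depolarizing channel with `λ ≥ 0` applied to a pure state of mean
energy `E` (Hamiltonian eigenvalues `0 = ε₁ ≤ ... ≤ ε_d = 1`), the output
ergotropy equals `λE`. -/
theorem depolarizing_output_ergotropy_nonneg (d : ℕ) (hd : 0 < d) (l : ℝ)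
    (hl0 : 0 ≤ l) (hl1 : l ≤ 1)
    (eps : Fin d → ℝ) (hmono : Monotone eps)
    (h0 : eps ⟨0, hd⟩ = 0) (h1 : eps ⟨d - 1, Nat.sub_lt hd Nat.one_pos⟩ = 1)
    (ψ : Fin d → ℂ) (hψ : dotProduct (star ψ) ψ = 1) :
    ergotropy (depol d l (pureProj d ψ)) (Matrix.diagonal fun i => (eps i : ℂ))
      = l * energy (pureProj d ψ) (Matrix.diagonal fun i => (eps i : ℂ)) := by
  set H : Matrix (Fin d) (Fin d) ℂ := Matrix.diagonal fun i => (eps i : ℂ) with hH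
  set ρ : Matrix (Fin d) (Fin d) ℂ := pureProj d ψ with hρdef
  have htr : Matrix.trace ρ = 1 := by
    rw [← hψ]
    simp only [hρdef, pureProj, Matrix.trace, Matrix.diag_apply, Matrix.of_apply,
      dotProduct, Matrix.star_apply]
    exact Finset.sum_congr rfl fun i _ => mul_comm _ _
  have hepsnn : ∀ i, 0 ≤ eps i := fun i => h0 ▸ hmono (show (⟨0, hd⟩ : Fin d) ≤ i by simp [Fin.le_def])
  set c : ℝ := ((1 - l) / d) * (Matrix.trace H).re with hc
  -- every conjugated pure state has nonnegative energy
  have hnonneg : ∀ U : Matrix (Fin d) (Fin d) ℂ, 0 ≤ energy (U * ρ * star U) H := by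
    intro U
    rw [hH, energy_diag]
    refine Finset.sum_nonneg fun i _ => mul_nonneg (hepsnn i) ?_
    rw [hρdef, conj_pureProj_diag]
    have : (U *ᵥ ψ) i * star ((U *ᵥ ψ) i) = (Complex.normSq ((U *ᵥ ψ) i) : ℂ) := by
      rw [Complex.star_def, Complex.mul_conj]
    rw [this]
    simp [Complex.normSq_nonneg]
  -- a unitary achieving zero energy
  obtain ⟨U0, hU0, hU0v⟩ := exists_unitary_mulVec hd ψ hψ
  have hzero : energy (U0 * ρ * star U0) H = 0 := by
    rw [hH, energy_diag]
    have : ∀ i, eps i * ((U0 * ρ * star U0) i i).re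
        = if i = (⟨0, hd⟩ : Fin d) then eps i else 0 := by
      intro i
      rw [hρdef, conj_pureProj_diag, hU0v i]
      by_cases h : i = (⟨0, hd⟩ : Fin d) <;> simp [h]
    rw [Finset.sum_congr rfl fun i _ => this i, Finset.sum_ite_eq' Finset.univ _ eps]
    simp [h0]
  -- the minimum energy of the depolarized state is c
  have hmin : minEnergy (depol d l ρ) H = c := by
    unfold minEnergy
    have hmem : c ∈ {x | ∃ U ∈ Matrix.unitaryGroup (Fin d) ℂ,
        x = energy (U * depol d l ρ * star U) H} := by
      refine ⟨U0, hU0, ?_⟩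
      rw [energy_depol l ρ H htr U0 hU0, hzero, hc]
      ring
    have hlb : ∀ x ∈ {x | ∃ U ∈ Matrix.unitaryGroup (Fin d) ℂ,
        x = energy (U * depol d l ρ * star U) H}, c ≤ x := by
      rintro x ⟨U, hU, rfl⟩
      rw [energy_depol l ρ H htr U hU]
      have := mul_nonneg hl0 (hnonneg U)
      rw [hc]; linarith
    exact le_antisymm (csInf_le ⟨c, hlb⟩ hmem) (le_csInf ⟨c, hmem⟩ hlb)
  have h1U : (1 : Matrix (Fin d) (Fin d) ℂ) ∈ Matrix.unitaryGroup (Fin d) ℂ := by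
    rw [Matrix.mem_unitaryGroup_iff]; simp
  have henergy : energy (depol d l ρ) H = l * energy ρ H + c := by
    have := energy_depol l ρ H htr 1 h1U
    simpa [hc] using this
  rw [ergotropy, hmin, henergy]
  ring
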